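/- Let $z: [0,\pi]\times[0,2\pi] \to \mathbb{R}^3$ be a $C^2$ parameterized surface with $z_\theta \times z_\phi \neq 0$ everywhere, let $\nu = \frac{z_\theta\times z_\phi}{|z_\theta\times z_\phi|}$, let $u:\mathbb{R}^3\to\mathbb{C}$ be $C^2$, and define $G(z) := \nu\cdot\nabla u(z)$ pointwise. Then for a $C^2$ perturbation $h$, the Gâteaux derivative $\frac{d}{dt}\big|_{t=0} G(z+th)$ at each point equals $\frac{1}{|z_\theta\times z_\phi|}\left((I-\nu\nu^\top)(h_\theta\times z_\phi + z_\theta\times h_\phi)\right)\cdot\nabla u(z) + \nu\cdot\left(\nabla\nabla^\top u(z)\,h\right)$. -/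

import Mathlib

noncomputable section

/-- The cross product on `ℝ³ = EuclideanSpace ℝ (Fin 3)`. -/
def cross3 (a b : EuclideanSpace ℝ (Fin 3)) : EuclideanSpace ℝ (Fin 3) :=
  (EuclideanSpace.equiv (Fin 3) ℝ).symm
    (crossProduct ((EuclideanSpace.equiv (Fin 3) ℝ) a) ((EuclideanSpace.equiv (Fin 3) ℝ) b))

/-- Partial derivative in `θ` (first parameter) of a parameterized surface. -/
def dTheta (z : ℝ × ℝ → EuclideanSpace ℝ (Fin 3)) (p : ℝ × ℝ) : EuclideanSpace ℝ (Fin 3) :=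
  fderiv ℝ z p (1, 0)

/-- Partial derivative in `φ` (second parameter) of a parameterized surface. -/
def dPhi (z : ℝ × ℝ → EuclideanSpace ℝ (Fin 3)) (p : ℝ × ℝ) : EuclideanSpace ℝ (Fin 3) :=
  fderiv ℝ z p (0, 1)

/-- The unit normal `ν = (z_θ × z_φ)/|z_θ × z_φ|` of a parameterized surface. -/
def surfNormal (z : ℝ × ℝ → EuclideanSpace ℝ (Fin 3)) (p : ℝ × ℝ) : EuclideanSpace ℝ (Fin 3) :=
  ‖cross3 (dTheta z p) (dPhi z p)‖⁻¹ • cross3 (dTheta z p) (dPhi z p)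

/-- First partial derivative `∂_i u` of `u : ℝ³ → ℂ`. -/
def partial1 (u : EuclideanSpace ℝ (Fin 3) → ℂ) (x : EuclideanSpace ℝ (Fin 3)) (i : Fin 3) : ℂ :=
  fderiv ℝ u x (EuclideanSpace.single i 1)

/-- Second partial derivative `∂_i ∂_j u` of `u : ℝ³ → ℂ` (Hessian entry). -/
def partial2 (u : EuclideanSpace ℝ (Fin 3) → ℂ) (x : EuclideanSpace ℝ (Fin 3)) (i j : Fin 3) : ℂ :=
  fderiv ℝ (fun y => fderiv ℝ u y (EuclideanSpace.single j 1)) x (EuclideanSpace.single i 1)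

/-- The boundary operator `G(z) = ν·∇u(z)` for a parameterized surface `z`, pointwise. -/
def bdryOp (u : EuclideanSpace ℝ (Fin 3) → ℂ) (z : ℝ × ℝ → EuclideanSpace ℝ (Fin 3))
    (p : ℝ × ℝ) : ℂ :=
  ∑ i : Fin 3, ((surfNormal z p i : ℝ) : ℂ) * partial1 u (z p) i

lemma cross3_add_left (a a' b : EuclideanSpace ℝ (Fin 3)) :
    cross3 (a + a') b = cross3 a b + cross3 a' b := by
  simp [cross3, map_add, LinearMap.add_apply]

lemma cross3_add_right (a b b' : EuclideanSpace ℝ (Fin 3)) :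
    cross3 a (b + b') = cross3 a b + cross3 a b' := by
  simp [cross3, map_add]

lemma cross3_smul_left (t : ℝ) (a b : EuclideanSpace ℝ (Fin 3)) :
    cross3 (t • a) b = t • cross3 a b := by
  simp [cross3, map_smul, LinearMap.smul_apply]

lemma cross3_smul_right (t : ℝ) (a b : EuclideanSpace ℝ (Fin 3)) :
    cross3 a (t • b) = t • cross3 a b := by
  simp [cross3, map_smul]

lemma euclid_sum_single (x : EuclideanSpace ℝ (Fin 3)) :
    x = ∑ j : Fin 3, x j • EuclideanSpace.single j (1:ℝ) := by
  ext k
  rw [show ((∑ j : Fin 3, x j • EuclideanSpace.single j (1:ℝ)) k)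
      = ∑ j : Fin 3, (x j • EuclideanSpace.single j (1:ℝ)) k from
    by rw [WithLp.ofLp_sum]; exact Finset.sum_apply k Finset.univ _]
  simp [EuclideanSpace.single_apply]


/-- Theorem 3.2 of the paper: for a `C²` parameterized surface `z` with
`z_θ × z_φ ≠ 0`, `ν = (z_θ × z_φ)/|z_θ × z_φ|`, a `C²` function `u : ℝ³ → ℂ`,
`G(z) = ν·∇u(z)`, and a `C²` perturbation `h`, the Gâteaux derivative
`d/dt|_{t=0} G(z+th)` at each point equals
`(1/|z_θ×z_φ|)((I-ννᵀ)(h_θ×z_φ + z_θ×h_φ))·∇u(z) + ν·(∇∇ᵀu(z) h)`. -/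
theorem boundary_operator_gateaux_deriv_3D
    (z h : ℝ × ℝ → EuclideanSpace ℝ (Fin 3)) (hz : ContDiff ℝ 2 z) (hh : ContDiff ℝ 2 h)
    (hz' : ∀ p : ℝ × ℝ, cross3 (dTheta z p) (dPhi z p) ≠ 0)
    (u : EuclideanSpace ℝ (Fin 3) → ℂ) (hu : ContDiff ℝ 2 u) (p : ℝ × ℝ) :
    HasDerivAt (fun t : ℝ => bdryOp u (fun q => z q + t • h q) p)
      ((∑ i : Fin 3,
          (((‖cross3 (dTheta z p) (dPhi z p)‖⁻¹ •
                ((cross3 (dTheta h p) (dPhi z p) + cross3 (dTheta z p) (dPhi h p)) -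
                  (inner ℝ (surfNormal z p)
                      (cross3 (dTheta h p) (dPhi z p) + cross3 (dTheta z p) (dPhi h p)) : ℝ) •
                    surfNormal z p)) i : ℝ) : ℂ) *
            partial1 u (z p) i) +
        ∑ i : Fin 3, ((surfNormal z p i : ℝ) : ℂ) *
          ∑ j : Fin 3, partial2 u (z p) i j * ((h p j : ℝ) : ℂ)) 0 := by
  have hzd : Differentiable ℝ z := hz.differentiable two_ne_zero
  have hhd : Differentiable ℝ h := hh.differentiable two_ne_zero
  set A := dTheta z p with hAdef
  set A' := dTheta h p with hA'def
  set B := dPhi z p with hBdef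
  set B' := dPhi h p with hB'def
  set c0 := cross3 A B with hc0def
  set c1 := cross3 A' B + cross3 A B' with hc1def
  set c2 := cross3 A' B' with hc2def
  have hc0ne : c0 ≠ 0 := hz' p
  have hN : (0:ℝ) < ‖c0‖ := norm_pos_iff.mpr hc0ne
  have hNne : ‖c0‖ ≠ 0 := ne_of_gt hN
  set c : ℝ → EuclideanSpace ℝ (Fin 3) := fun t => c0 + t • c1 + (t*t) • c2 with hcdef
  have hc00 : c 0 = c0 := by simp [hcdef]
  -- perturbed normals
  have hsurf : ∀ t : ℝ, surfNormal (fun q => z q + t • h q) p = ‖c t‖⁻¹ • c t := by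
    intro t
    have hft : HasFDerivAt (fun q => z q + t • h q)
        (fderiv ℝ z p + t • fderiv ℝ h p) p :=
      (hzd p).hasFDerivAt.add ((hhd p).hasFDerivAt.const_smul t)
    have hdt : dTheta (fun q => z q + t • h q) p = A + t • A' := by
      simp [dTheta, hft.fderiv, hAdef, hA'def]
    have hdp : dPhi (fun q => z q + t • h q) p = B + t • B' := by
      simp [dPhi, hft.fderiv, hBdef, hB'def]
    have hcr : cross3 (A + t • A') (B + t • B') = c t := by
      simp only [cross3_add_left, cross3_add_right, cross3_smul_left, cross3_smul_right,
        hcdef, hc0def, hc1def, hc2def, smul_add, smul_smul]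
      module
    rw [surfNormal, hdt, hdp, hcr]
  -- derivative of c
  have hcd : HasDerivAt c c1 0 := by
    have h1 : HasDerivAt (fun t : ℝ => t • c1) ((1:ℝ) • c1) 0 :=
      (hasDerivAt_id (0:ℝ)).smul_const c1
    have h2 := ((hasDerivAt_id (0:ℝ)).mul (hasDerivAt_id (0:ℝ))).smul_const c2
    have := ((hasDerivAt_const (0:ℝ) c0).add h1).add h2
    simpa [Pi.add_def] using this
  -- derivative of the norm
  have hQ0ne : (inner ℝ c0 c0 : ℝ) ≠ 0 := by
    rw [real_inner_self_eq_norm_sq]; positivity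
  have hinner : HasDerivAt (fun t => (inner ℝ (c t) (c t) : ℝ)) (2 * inner ℝ c0 c1) 0 := by
    have := hcd.inner ℝ hcd
    rw [hc00] at this
    simpa [real_inner_comm, two_mul, mul_comm] using this
  have hnorm : HasDerivAt (fun t => ‖c t‖) (inner ℝ c0 c1 / ‖c0‖) 0 := by
    have h0 : (inner ℝ (c 0) (c 0) : ℝ) ≠ 0 := by rw [hc00]; exact hQ0ne
    have hsq := (Real.hasDerivAt_sqrt h0).comp 0 hinner
    have hfun : (Real.sqrt ∘ fun t => (inner ℝ (c t) (c t) : ℝ)) = fun t => ‖c t‖ := by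
      funext t
      exact (norm_eq_sqrt_real_inner (c t)).symm
    rw [hfun, hc00] at hsq
    refine hsq.congr_deriv (Eq.symm ?_)
    rw [← norm_eq_sqrt_real_inner]
    field_simp
  have hinv : HasDerivAt (fun t => ‖c t‖⁻¹)
      (-(inner ℝ c0 c1 / ‖c0‖) / ‖c0‖^2) 0 := by
    have := hnorm.inv (by rw [hc00]; exact hNne)
    rwa [hc00] at this
  -- component derivatives of c
  have hccomp : ∀ i : Fin 3, HasDerivAt (fun t => c t i) (c1 i) 0 := by
    intro i
    have heq : (fun t => c t i) = fun t : ℝ => c0 i + t * c1 i + (t*t) * c2 i := by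
      funext t
      simp [hcdef]
    rw [heq]
    have h1 : HasDerivAt (fun t : ℝ => t * c1 i) (c1 i) 0 := by
      simpa using (hasDerivAt_id (0:ℝ)).mul_const (c1 i)
    have h2 : HasDerivAt (fun t : ℝ => (t*t) * c2 i) 0 0 := by
      simpa using ((hasDerivAt_id (0:ℝ)).mul (hasDerivAt_id (0:ℝ))).mul_const (c2 i)
    simpa [Pi.add_def] using ((hasDerivAt_const (0:ℝ) (c0 i)).add h1).add h2
  have hni : ∀ i : Fin 3, HasDerivAt (fun t => ‖c t‖⁻¹ * c t i)
      ((-(inner ℝ c0 c1 / ‖c0‖) / ‖c0‖^2) * c0 i + ‖c0‖⁻¹ * c1 i) 0 := by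
    intro i
    have := hinv.mul (hccomp i)
    simpa [hc00, Pi.mul_def] using this
  -- the gradient components
  set gr : Fin 3 → EuclideanSpace ℝ (Fin 3) → ℂ :=
    fun i y => fderiv ℝ u y (EuclideanSpace.single i 1) with hgrdef
  have hgc : ∀ i, ContDiff ℝ 1 (gr i) := fun i =>
    (hu.fderiv_right (by norm_num)).clm_apply contDiff_const
  have hx : HasDerivAt (fun t : ℝ => z p + t • h p) (h p) 0 := by
    have := ((hasDerivAt_id (0:ℝ)).smul_const (h p)).const_add (z p)
    simpa using this
  have h00 : z p + (0:ℝ) • h p = z p := by simp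
  have hgd : ∀ i, HasDerivAt (fun t : ℝ => gr i (z p + t • h p))
      (fderiv ℝ (gr i) (z p) (h p)) 0 := by
    intro i
    have hdiff : DifferentiableAt ℝ (gr i) (z p) :=
      ((hgc i).differentiable one_ne_zero) (z p)
    have hfd : HasFDerivAt (gr i) (fderiv ℝ (gr i) (z p)) (z p + (0:ℝ) • h p) := by
      rw [h00]; exact hdiff.hasFDerivAt
    exact hfd.comp_hasDerivAt 0 hx
  -- per-term derivatives
  have hterm : ∀ i : Fin 3, HasDerivAt
      (fun t => (((‖c t‖⁻¹ * c t i : ℝ) : ℂ)) * gr i (z p + t • h p))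
      ((((-(inner ℝ c0 c1 / ‖c0‖) / ‖c0‖^2) * c0 i + ‖c0‖⁻¹ * c1 i : ℝ) : ℂ) * gr i (z p)
        + ((‖c0‖⁻¹ * c0 i : ℝ) : ℂ) * fderiv ℝ (gr i) (z p) (h p)) 0 := by
    intro i
    have hre : HasDerivAt (fun t => (((‖c t‖⁻¹ * c t i : ℝ) : ℂ)))
        ((((-(inner ℝ c0 c1 / ‖c0‖) / ‖c0‖^2) * c0 i + ‖c0‖⁻¹ * c1 i : ℝ) : ℂ)) 0 :=
      Complex.ofRealCLM.hasFDerivAt.comp_hasDerivAt 0 (hni i)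
    have := hre.mul (hgd i)
    simpa [hc00, h00, Pi.mul_def] using this
  have hsum := HasDerivAt.fun_sum (u := Finset.univ) (fun i _ => hterm i)
  -- rewrite the goal function
  have hfeq : (fun t : ℝ => bdryOp u (fun q => z q + t • h q) p)
      = fun t : ℝ => ∑ i : Fin 3, (((‖c t‖⁻¹ * c t i : ℝ) : ℂ)) * gr i (z p + t • h p) := by
    funext t
    rw [bdryOp]
    refine Finset.sum_congr rfl fun i _ => ?_
    rw [hsurf t]
    simp only [PiLp.smul_apply, smul_eq_mul, partial1, hgrdef]
  rw [hfeq]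
  refine hsum.congr_deriv (Eq.symm ?_)
  -- derivative value equality
  rw [← Finset.sum_add_distrib]
  refine Finset.sum_congr rfl fun i _ => ?_
  have hν : surfNormal z p = ‖c0‖⁻¹ • c0 := by rw [surfNormal]
  congr 1
  · -- first part
    have hreal : (‖c0‖⁻¹ • (c1 - (inner ℝ (surfNormal z p) c1 : ℝ) • surfNormal z p)) i
        = (-(inner ℝ c0 c1 / ‖c0‖) / ‖c0‖^2) * c0 i + ‖c0‖⁻¹ * c1 i := by
      rw [hν]
      simp only [PiLp.smul_apply, PiLp.sub_apply, smul_eq_mul, real_inner_smul_left]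
      field_simp
      ring
    rw [hreal]
    rfl
  · -- second part
    rw [hν]
    simp only [PiLp.smul_apply, smul_eq_mul]
    congr 1
    -- ∑ j partial2 i j * h_j = fderiv (gr i) (z p) (h p)
    have hfd2 : DifferentiableAt ℝ (fderiv ℝ u) (z p) :=
      ((hu.fderiv_right (by norm_num)).differentiable one_ne_zero) (z p)
    have hsymm : IsSymmSndFDerivAt ℝ u (z p) :=
      hu.contDiffAt.isSymmSndFDerivAt (by simp)
    have hswap : ∀ v w : EuclideanSpace ℝ (Fin 3),
        fderiv ℝ (fun y => fderiv ℝ u y v) (z p) w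
          = fderiv ℝ (fun y => fderiv ℝ u y w) (z p) v := by
      intro v w
      rw [fderiv_clm_apply hfd2 (differentiableAt_const v),
          fderiv_clm_apply hfd2 (differentiableAt_const w)]
      simp only [fderiv_const, fderiv_const_apply, Pi.zero_apply, ContinuousLinearMap.comp_zero,
        ContinuousLinearMap.zero_apply, ContinuousLinearMap.add_apply,
        ContinuousLinearMap.flip_apply, zero_add]
      exact hsymm w v
    have hS : (fderiv ℝ (gr i) (z p)) (h p)
        = ∑ j : Fin 3, partial2 u (z p) i j * ((h p j : ℝ) : ℂ) := by
      conv_lhs => rw [euclid_sum_single (h p)]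
      rw [map_sum]
      refine Finset.sum_congr rfl fun j _ => ?_
      rw [map_smul]
      rw [partial2]
      have : fderiv ℝ (gr i) (z p) (EuclideanSpace.single j 1)
          = fderiv ℝ (fun y => fderiv ℝ u y (EuclideanSpace.single j 1)) (z p)
              (EuclideanSpace.single i 1) := by
        rw [hgrdef]
        exact hswap (EuclideanSpace.single i 1) (EuclideanSpace.single j 1)
      rw [this, Complex.real_smul]
      ring
    rw [hS]
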